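/- (Lemma 6.4) Let f : ℝ^n → ℝ be differentiable, convex, and coordinate-wise smooth with parameters (L_1,…,L_n), each L_i > 0. Fix β ∈ [0,1], set α := (1−β)/2, S_α := Σ_i L_i^α, p_i := L_i^α/S_α. Fix η > 0 with 1/(η·S_α²) ≤ 1, set τ := 1/(η·S_α²), fix y_k, z_k ∈ ℝ^n and let x_{k+1} := τ·z_k + (1−τ)·y_k. For each i define y^{(i)} := x_{k+1} − (1/L_i)·∇_i f(x_{k+1})·e_i and z^{(i)} := z_k − (η/(p_i·L_i^β))·∇_i f(x_{k+1})·e_i. Then for every u ∈ ℝ^n: 0 ≤ (η²S_α² − η)·(f(y_k) − f(u)) − η²S_α²·Σ_{i=1}^n p_i·(f(y^{(i)}) − f(u)) + (1/2)‖z_k − u‖²_{L_β} − (1/2)·Σ_{i=1}^n p_i·‖z^{(i)} − u‖²_{L_β}. -/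

import Mathlib

/-- The i-th standard basis vector of ℝ^n. -/
def basisVec {n : ℕ} (i : Fin n) : Fin n → ℝ := Pi.single i 1

/-- The i-th partial derivative ∇_i f(x). -/
noncomputable def coordGrad {n : ℕ} (f : (Fin n → ℝ) → ℝ) (x : Fin n → ℝ) (i : Fin n) : ℝ :=
  fderiv ℝ f x (basisVec i)

/-- f is coordinate-wise smooth with parameters (L_1, …, L_n):
`|∇_i f(x + δ e_i) − ∇_i f(x)| ≤ L_i |δ|` for all x, δ, i. -/
def CoordSmooth {n : ℕ} (f : (Fin n → ℝ) → ℝ) (L : Fin n → ℝ) : Prop :=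
  ∀ (x : Fin n → ℝ) (δ : ℝ) (i : Fin n),
    |coordGrad f (x + δ • basisVec i) i - coordGrad f x i| ≤ L i * |δ|

/-- Weighted squared norm ‖v‖²_{L_β} := Σ_i L_i^β · v_i². -/
noncomputable def wnormSq {n : ℕ} (L : Fin n → ℝ) (β : ℝ) (v : Fin n → ℝ) : ℝ :=
  ∑ i, L i ^ β * v i ^ 2

lemma conv1d {φ : ℝ → ℝ} (hc : ConvexOn ℝ Set.univ φ) {d x y : ℝ} (hd : HasDerivAt φ d x) :
    φ x + d * (y - x) ≤ φ y := by
  rcases lt_trichotomy x y with h | h | h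
  · have h2 := hc.le_slope_of_hasDerivAt (Set.mem_univ x) (Set.mem_univ y) h hd
    rw [slope_def_field] at h2
    have h3 : d * (y - x) ≤ φ y - φ x := by
      rw [← le_div_iff₀ (by linarith)]; linarith
    linarith
  · simp [h]
  · have h2 := hc.slope_le_of_hasDerivAt (Set.mem_univ y) (Set.mem_univ x) h hd
    rw [slope_def_field] at h2
    have h3 : φ x - φ y ≤ d * (x - y) := by
      rw [← div_le_iff₀ (by linarith)]; linarith
    linarith

lemma conv_grad {n : ℕ} {f : (Fin n → ℝ) → ℝ} (hf : Differentiable ℝ f)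
    (hconv : ConvexOn ℝ Set.univ f) (x v : Fin n → ℝ) :
    f x + fderiv ℝ f x (v - x) ≤ f v := by
  have hline : ∀ t : ℝ, HasDerivAt (fun t : ℝ => x + t • (v - x)) (v - x) t := by
    intro t
    simpa using ((hasDerivAt_id t).smul_const (v - x)).const_add x
  have hφ : ∀ t : ℝ, HasDerivAt (fun t : ℝ => f (x + t • (v - x)))
      (fderiv ℝ f (x + t • (v - x)) (v - x)) t := by
    intro t
    exact (hf (x + t • (v - x))).hasFDerivAt.comp_hasDerivAt t (hline t)
  have hcφ : ConvexOn ℝ Set.univ (fun t : ℝ => f (x + t • (v - x))) := by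
    have := hconv.comp_affineMap (AffineMap.lineMap x v)
    simp only [Set.preimage_univ] at this
    have he : (fun t : ℝ => f (x + t • (v - x))) = f ∘ AffineMap.lineMap x v := by
      funext t
      simp [AffineMap.lineMap_apply]
      abel
    rw [he]
    exact this
  have := conv1d hcφ (y := 1) (hφ 0)
  simpa using this

lemma fderiv_expand {n : ℕ} (f : (Fin n → ℝ) → ℝ) (x w : Fin n → ℝ) :
    fderiv ℝ f x w = ∑ i, w i * coordGrad f x i := by
  have hw : w = ∑ i, w i • basisVec i := by
    funext j
    simp [basisVec, Finset.sum_apply, Pi.single_apply]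
  conv_lhs => rw [hw]
  rw [map_sum]
  simp [coordGrad]

lemma quad_ub {φ φ' : ℝ → ℝ} {Li : ℝ} (hLi : 0 < Li) (hd : ∀ t, HasDerivAt φ (φ' t) t)
    (hlip : ∀ t, |φ' t - φ' 0| ≤ Li * |t|) (t : ℝ) :
    φ t ≤ φ 0 + φ' 0 * t + Li / 2 * t ^ 2 := by
  set ψ : ℝ → ℝ := fun s => φ 0 + φ' 0 * s + Li / 2 * s ^ 2 - φ s with hψ
  have hψd : ∀ s, HasDerivAt ψ (φ' 0 + Li * s - φ' s) s := by
    intro s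
    have h1 : HasDerivAt (fun s : ℝ => φ 0 + φ' 0 * s + Li / 2 * s ^ 2)
        (φ' 0 + Li * s) s := by
      have := (((hasDerivAt_id s).const_mul (φ' 0)).const_add (φ 0)).add
        (((hasDerivAt_pow 2 s)).const_mul (Li / 2))
      exact this.congr_deriv (by simp; ring)
    exact h1.sub (hd s)
  have hψderiv : ∀ s, deriv ψ s = φ' 0 + Li * s - φ' s := fun s => (hψd s).deriv
  have hψcont : Continuous ψ := by
    have : Differentiable ℝ ψ := fun s => (hψd s).differentiableAt
    exact this.continuous
  have key : (0:ℝ) ≤ ψ t := by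
    have hpsi0 : ψ 0 = 0 := by simp [hψ]
    rcases le_or_gt 0 t with ht | ht
    · have hm := monotoneOn_of_deriv_nonneg (convex_Icc 0 t) hψcont.continuousOn
        (fun s _ => ((hψd s).differentiableAt).differentiableWithinAt)
        (fun s hs => by
          rw [interior_Icc] at hs
          rw [hψderiv]
          have := (abs_le.1 (hlip s)).2
          rw [abs_of_nonneg (le_of_lt hs.1)] at this
          linarith)
      have := hm (Set.left_mem_Icc.2 ht) (Set.right_mem_Icc.2 ht) ht
      linarith [this, hpsi0 ▸ this]
    · have hm := antitoneOn_of_deriv_nonpos (convex_Icc t 0) hψcont.continuousOn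
        (fun s _ => ((hψd s).differentiableAt).differentiableWithinAt)
        (fun s hs => by
          rw [interior_Icc] at hs
          rw [hψderiv]
          have := (abs_le.1 (hlip s)).1
          rw [abs_of_nonpos (le_of_lt hs.2)] at this
          linarith)
      have := hm (Set.left_mem_Icc.2 ht.le) (Set.right_mem_Icc.2 ht.le) ht.le
      rw [hpsi0] at this
      linarith
  simp only [hψ] at key
  linarith

lemma descent {n : ℕ} {f : (Fin n → ℝ) → ℝ} {L : Fin n → ℝ}
    (hf : Differentiable ℝ f) (hsmooth : CoordSmooth f L) (x : Fin n → ℝ) (i : Fin n)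
    (hLi : 0 < L i) :
    f (x - (1 / L i * coordGrad f x i) • basisVec i)
      ≤ f x - coordGrad f x i ^ 2 / (2 * L i) := by
  set g := coordGrad f x i with hg
  have hline : ∀ t : ℝ, HasDerivAt (fun t : ℝ => x + t • basisVec i) (basisVec i) t := by
    intro t
    simpa using ((hasDerivAt_id t).smul_const (basisVec i)).const_add x
  have hφ : ∀ t : ℝ, HasDerivAt (fun t : ℝ => f (x + t • basisVec i))
      (coordGrad f (x + t • basisVec i) i) t := by
    intro t
    exact (hf (x + t • basisVec i)).hasFDerivAt.comp_hasDerivAt t (hline t)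
  have hlip : ∀ t : ℝ, |coordGrad f (x + t • basisVec i) i
      - coordGrad f (x + (0:ℝ) • basisVec i) i| ≤ L i * |t| := by
    intro t
    simpa using hsmooth x t i
  have hq := quad_ub hLi hφ (by simpa using hlip) (-(1 / L i * g))
  have h0 : x + (0:ℝ) • basisVec i = x := by simp
  rw [show x + (-(1 / L i * g)) • basisVec i = x - (1 / L i * g) • basisVec i by
    rw [neg_smul, ← sub_eq_add_neg]] at hq
  simp only [h0] at hq
  have halg : coordGrad f x i * -(1 / L i * g) + L i / 2 * (-(1 / L i * g)) ^ 2
      = -(g ^ 2 / (2 * L i)) := by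
    rw [← hg]
    field_simp
    ring
  linarith [hq, halg]

lemma wnorm_sub_single {n : ℕ} (L : Fin n → ℝ) (β : ℝ) (w : Fin n → ℝ) (i : Fin n) (c : ℝ) :
    wnormSq L β (w - c • basisVec i)
      = wnormSq L β w - 2 * L i ^ β * c * w i + L i ^ β * c ^ 2 := by
  unfold wnormSq
  have hpt : ∀ j, L j ^ β * ((w - c • basisVec i) j) ^ 2
      = L j ^ β * (w j) ^ 2
        + (if j = i then (-(2 * L i ^ β * c * w i) + L i ^ β * c ^ 2) else 0) := by
    intro j
    by_cases h : j = i
    · subst h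
      simp [basisVec, Pi.single_apply]
      ring
    · simp [basisVec, Pi.single_apply, h]
  rw [Finset.sum_congr rfl (fun j _ => hpt j), Finset.sum_add_distrib,
    Finset.sum_ite_eq' Finset.univ i]
  simp
  ring

/-- Lemma 6.4: the per-iteration inequality of NU_ACDM^ns. -/
theorem stmt_11 (n : ℕ) (f : (Fin n → ℝ) → ℝ) (L : Fin n → ℝ)
    (hf : Differentiable ℝ f) (hconv : ConvexOn ℝ Set.univ f) (hL : ∀ i, 0 < L i)
    (hsmooth : CoordSmooth f L)
    (β : ℝ) (hβ : β ∈ Set.Icc (0 : ℝ) 1)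
    (α Sα : ℝ) (hα : α = (1 - β) / 2) (hS : Sα = ∑ i, L i ^ α)
    (p : Fin n → ℝ) (hp : ∀ i, p i = L i ^ α / Sα)
    (η τ : ℝ) (hη : 0 < η) (hτ1 : 1 / (η * Sα ^ 2) ≤ 1) (hτ : τ = 1 / (η * Sα ^ 2))
    (yk zk xk1 : Fin n → ℝ) (hx : xk1 = τ • zk + (1 - τ) • yk)
    (Y Z : Fin n → Fin n → ℝ)
    (hY : ∀ i, Y i = xk1 - (1 / L i * coordGrad f xk1 i) • basisVec i)
    (hZ : ∀ i, Z i = zk - (η / (p i * L i ^ β) * coordGrad f xk1 i) • basisVec i)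
    (u : Fin n → ℝ) :
    0 ≤ (η ^ 2 * Sα ^ 2 - η) * (f yk - f u)
        - η ^ 2 * Sα ^ 2 * ∑ i, p i * (f (Y i) - f u)
        + (1 / 2) * wnormSq L β (zk - u)
        - (1 / 2) * ∑ i, p i * wnormSq L β (Z i - u) := by
  rcases Nat.eq_zero_or_pos n with hn | hn
  · subst hn
    have hyu : yk = u := Subsingleton.elim yk u
    simp [wnormSq, hyu]
  -- nontrivial case
  have hFin : Nonempty (Fin n) := ⟨⟨0, hn⟩⟩
  have hLa : ∀ i, 0 < L i ^ α := fun i => Real.rpow_pos_of_pos (hL i) α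
  have hSpos : 0 < Sα := by
    rw [hS]
    exact Finset.sum_pos (fun i _ => hLa i) Finset.univ_nonempty
  have hppos : ∀ i, 0 < p i := fun i => by
    rw [hp i]; exact div_pos (hLa i) hSpos
  have hpsum : ∑ i, p i = 1 := by
    simp only [hp]
    rw [← Finset.sum_div, ← hS, div_self hSpos.ne']
  have hEpos : 0 < η * Sα ^ 2 := by positivity
  have hE : 1 ≤ η * Sα ^ 2 := by
    rwa [div_le_one hEpos] at hτ1
  have hτval : τ * (η * Sα ^ 2) = 1 := by
    rw [hτ]; field_simp
  have hLβ : ∀ i, 0 < L i ^ β := fun i => Real.rpow_pos_of_pos (hL i) β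
  have hpow : ∀ i, L i ^ α * L i ^ α * L i ^ β = L i := by
    intro i
    rw [← Real.rpow_add (hL i), ← Real.rpow_add (hL i),
      show α + α + β = 1 by rw [hα]; ring, Real.rpow_one]
  -- coefficient identities
  have hc1 : ∀ i, p i * (2 * L i ^ β * (η / (p i * L i ^ β) * coordGrad f xk1 i) * (zk i - u i))
      = 2 * η * (coordGrad f xk1 i * (zk i - u i)) := by
    intro i
    have h1 : p i ≠ 0 := (hppos i).ne'
    have h2 : L i ^ β ≠ 0 := (hLβ i).ne'
    field_simp
  have hc2 : ∀ i, p i * (L i ^ β * (η / (p i * L i ^ β) * coordGrad f xk1 i) ^ 2)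
      = η ^ 2 * Sα ^ 2 * (p i * (coordGrad f xk1 i ^ 2 / L i)) := by
    intro i
    have hLi := hpow i
    rw [hp i]
    set a := L i ^ α with ha
    set b := L i ^ β with hb
    have ha0 : a ≠ 0 := (hLa i).ne'
    have hb0 : b ≠ 0 := (hLβ i).ne'
    rw [← hLi]
    field_simp
  -- Step 1: expansion of the weighted norms
  have hZi : ∀ i, Z i - u = (zk - u) - (η / (p i * L i ^ β) * coordGrad f xk1 i) • basisVec i := by
    intro i
    rw [hZ i]
    abel
  have hpt : ∀ i, p i * wnormSq L β (Z i - u)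
      = p i * wnormSq L β (zk - u) - 2 * η * (coordGrad f xk1 i * (zk i - u i))
        + η ^ 2 * Sα ^ 2 * (p i * (coordGrad f xk1 i ^ 2 / L i)) := by
    intro i
    rw [hZi i, wnorm_sub_single]
    have hzu : (zk - u) i = zk i - u i := rfl
    rw [hzu, mul_add, mul_sub, hc1 i, hc2 i]
  have hstep1 : ∑ i, p i * wnormSq L β (Z i - u)
      = wnormSq L β (zk - u) - 2 * η * (∑ i, coordGrad f xk1 i * (zk i - u i))
        + η ^ 2 * Sα ^ 2 * (∑ i, p i * (coordGrad f xk1 i ^ 2 / L i)) := by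
    rw [Finset.sum_congr rfl (fun i _ => hpt i), Finset.sum_add_distrib,
      Finset.sum_sub_distrib, ← Finset.sum_mul, ← Finset.mul_sum, ← Finset.mul_sum, hpsum,
      one_mul]
  -- Step 2: descent lemma
  have hdes : ∀ i, f (Y i) ≤ f xk1 - coordGrad f xk1 i ^ 2 / (2 * L i) := by
    intro i
    rw [hY i]
    exact descent hf hsmooth xk1 i (hL i)
  have hsumY : ∑ i, p i * f (Y i)
      ≤ f xk1 - (1 / 2) * ∑ i, p i * (coordGrad f xk1 i ^ 2 / L i) := by
    calc ∑ i, p i * f (Y i)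
        ≤ ∑ i, p i * (f xk1 - coordGrad f xk1 i ^ 2 / (2 * L i)) :=
          Finset.sum_le_sum fun i _ => mul_le_mul_of_nonneg_left (hdes i) (hppos i).le
      _ = (∑ i, p i) * f xk1 - (1 / 2) * ∑ i, p i * (coordGrad f xk1 i ^ 2 / L i) := by
          rw [Finset.sum_mul, Finset.mul_sum, ← Finset.sum_sub_distrib]
          exact Finset.sum_congr rfl fun i _ => by
            have h3 : L i ≠ 0 := (hL i).ne'
            field_simp
      _ = f xk1 - (1 / 2) * ∑ i, p i * (coordGrad f xk1 i ^ 2 / L i) := by rw [hpsum, one_mul]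
  -- Step 3: convexity inequalities
  have hcu : f xk1 + ∑ i, (u i - xk1 i) * coordGrad f xk1 i ≤ f u := by
    have h := conv_grad hf hconv xk1 u
    rw [fderiv_expand] at h
    simpa using h
  have hcy : f xk1 + ∑ i, (yk i - xk1 i) * coordGrad f xk1 i ≤ f yk := by
    have h := conv_grad hf hconv xk1 yk
    rw [fderiv_expand] at h
    simpa using h
  have hCdef : ∑ i, (u i - xk1 i) * coordGrad f xk1 i = -∑ i, coordGrad f xk1 i * (xk1 i - u i) := by
    rw [← Finset.sum_neg_distrib]
    exact Finset.sum_congr rfl fun i _ => by ring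
  have hBdef : ∑ i, (yk i - xk1 i) * coordGrad f xk1 i = -∑ i, coordGrad f xk1 i * (xk1 i - yk i) := by
    rw [← Finset.sum_neg_distrib]
    exact Finset.sum_congr rfl fun i _ => by ring
  rw [hCdef] at hcu
  rw [hBdef] at hcy
  -- Step 4: decomposition of zk - u
  have hzk : ∀ i, zk i - u i
      = (η * Sα ^ 2 - 1) * (xk1 i - yk i) + (xk1 i - u i) := by
    intro i
    have hxi : xk1 i = τ * zk i + (1 - τ) * yk i := by
      rw [hx]; simp
    linear_combination (-(η * Sα ^ 2)) * hxi + (yk i - zk i) * hτval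
  have hA : ∑ i, coordGrad f xk1 i * (zk i - u i)
      = (η * Sα ^ 2 - 1) * (∑ i, coordGrad f xk1 i * (xk1 i - yk i)) + ∑ i, coordGrad f xk1 i * (xk1 i - u i) := by
    rw [Finset.mul_sum, ← Finset.sum_add_distrib]
    exact Finset.sum_congr rfl fun i _ => by rw [hzk i]; ring
  -- Step 5: final combination
  have hgoalsum : ∑ i, p i * (f (Y i) - f u) = (∑ i, p i * f (Y i)) - f u := by
    have hh : ∀ i : Fin n, p i * (f (Y i) - f u) = p i * f (Y i) - p i * f u :=
      fun i => by ring
    rw [Finset.sum_congr rfl (fun i _ => hh i), Finset.sum_sub_distrib, ← Finset.sum_mul,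
      hpsum, one_mul]
  have t1 : 0 ≤ η ^ 2 * Sα ^ 2 *
      ((f xk1 - (1 / 2) * ∑ i, p i * (coordGrad f xk1 i ^ 2 / L i)) - ∑ i, p i * f (Y i)) :=
    mul_nonneg (by positivity) (by linarith)
  have t2 : 0 ≤ (η * (η * Sα ^ 2 - 1)) *
      ((∑ i, coordGrad f xk1 i * (xk1 i - yk i)) - (f xk1 - f yk)) :=
    mul_nonneg (mul_nonneg hη.le (by linarith)) (by linarith)
  have t3 : 0 ≤ η * ((∑ i, coordGrad f xk1 i * (xk1 i - u i)) - (f xk1 - f u)) :=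
    mul_nonneg hη.le (by linarith)
  rw [hgoalsum, hstep1, hA]
  nlinarith [t1, t2, t3]
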